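/- arXiv:1607.04894 — 2 statements merged into one kernel-verified Lean document; each statement's English description precedes it below -/
import Mathlib

section
/- The derivative of f(θ) = (A₁ − x A₂ + y A₃)/(A₁ − 3A₂ + 2A₃), with A₁ = πR², A₂(θ) = 2R²(θ − sin θ cos θ), A₃(θ) = R²[3(θ − π/6) + √3 cos²θ − 3 sin θ cos θ], equals (√3 sin θ)/(6 cos³θ) · [(2 − y)(π − 2θ) + 4θ(1 + y − x)] times the appropriate constant, and is strictly positive on (π/6, arccos(1/√3)) provided 0 ≤ x < 3, 0 ≤ y < 2, and 1 + y − x > 0. -/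
open Real

/-- Case 2 of Proposition 3: on `(π/6, arccos(1/√3))`, the derivative of
`f(θ) = (A₁ − x A₂(θ) + y A₃(θ)) / (A₁ − 3 A₂(θ) + 2 A₃(θ))` equals
`(√3 sin θ)/(6 cos³ θ) · [(2 − y)(π − 2θ) + 4θ(1 + y − x)]` and is strictly
positive, provided `0 ≤ x < 3`, `0 ≤ y < 2` and `1 + y − x > 0`. -/
theorem coverage_fraction_deriv_case2 (R x y : ℝ) (hR : 0 < R)
    (hx0 : 0 ≤ x) (hx3 : x < 3) (hy0 : 0 ≤ y) (hy2 : y < 2)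
    (hxy : 0 < 1 + y - x)
    (A₁ : ℝ) (hA₁ : A₁ = π * R ^ 2)
    (A₂ A₃ : ℝ → ℝ)
    (hA₂ : ∀ θ, A₂ θ = 2 * R ^ 2 * (θ - Real.sin θ * Real.cos θ))
    (hA₃ : ∀ θ, A₃ θ = R ^ 2 * (3 * (θ - π / 6) + Real.sqrt 3 * Real.cos θ ^ 2
      - 3 * Real.sin θ * Real.cos θ)) :
    ∀ θ ∈ Set.Ioo (π / 6) (Real.arccos (1 / Real.sqrt 3)),
      HasDerivAt (fun θ => (A₁ - x * A₂ θ + y * A₃ θ) / (A₁ - 3 * A₂ θ + 2 * A₃ θ))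
        (Real.sqrt 3 * Real.sin θ / (6 * Real.cos θ ^ 3) *
          ((2 - y) * (π - 2 * θ) + 4 * θ * (1 + y - x))) θ ∧
      0 < Real.sqrt 3 * Real.sin θ / (6 * Real.cos θ ^ 3) *
          ((2 - y) * (π - 2 * θ) + 4 * θ * (1 + y - x)) := by
  intro θ hθ
  obtain ⟨hθ1, hθ2⟩ := hθ
  have hπ6 : (0:ℝ) < π / 6 := by positivity
  have hθpos : 0 < θ := lt_trans hπ6 hθ1
  have harc : Real.arccos (1 / Real.sqrt 3) < π / 2 := by
    rw [Real.arccos_lt_pi_div_two]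
    positivity
  have hθlt : θ < π / 2 := lt_trans hθ2 harc
  have hs : 0 < Real.sin θ := Real.sin_pos_of_pos_of_lt_pi hθpos
    (lt_trans hθlt (by linarith [Real.pi_pos]))
  have hc : 0 < Real.cos θ := Real.cos_pos_of_mem_Ioo ⟨by linarith, hθlt⟩
  have hcne : Real.cos θ ≠ 0 := ne_of_gt hc
  have hRne : R ≠ 0 := ne_of_gt hR
  have h3 : Real.sqrt 3 ^ 2 = 3 := Real.sq_sqrt (by norm_num)
  have h3pos : 0 < Real.sqrt 3 := Real.sqrt_pos.mpr (by norm_num)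
  have hpyth : Real.sin θ ^ 2 = 1 - Real.cos θ ^ 2 := by
    have := Real.sin_sq_add_cos_sq θ; linarith
  -- denominator simplifies
  have hden : ∀ t : ℝ, A₁ - 3 * A₂ t + 2 * A₃ t = 2 * Real.sqrt 3 * R ^ 2 * Real.cos t ^ 2 := by
    intro t
    have hp : Real.sin t ^ 2 = 1 - Real.cos t ^ 2 := by
      have := Real.sin_sq_add_cos_sq t; linarith
    rw [hA₁, hA₂, hA₃]
    ring
  have hdenne : A₁ - 3 * A₂ θ + 2 * A₃ θ ≠ 0 := by
    rw [hden θ]; positivity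
  -- derivative of numerator and denominator
  have hsc : HasDerivAt (fun t => Real.sin t * Real.cos t)
      (Real.cos θ * Real.cos θ + Real.sin θ * -Real.sin θ) θ :=
    (Real.hasDerivAt_sin θ).mul (Real.hasDerivAt_cos θ)
  have hcos2 : HasDerivAt (fun t => Real.cos t ^ 2)
      ((2 : ℕ) * Real.cos θ ^ 1 * -Real.sin θ) θ := by
    exact ((Real.hasDerivAt_cos θ).pow 2).congr_deriv (by norm_num)
  have hA2' : HasDerivAt A₂
      (2 * R ^ 2 * (1 - (Real.cos θ * Real.cos θ + Real.sin θ * -Real.sin θ))) θ := by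
    have : HasDerivAt (fun t => 2 * R ^ 2 * (t - Real.sin t * Real.cos t))
        (2 * R ^ 2 * (1 - (Real.cos θ * Real.cos θ + Real.sin θ * -Real.sin θ))) θ :=
      ((hasDerivAt_id θ).sub hsc).const_mul _
    exact (funext hA₂ : A₂ = _) ▸ this
  have hA3' : HasDerivAt A₃
      (R ^ 2 * (3 * 1 + Real.sqrt 3 * ((2 : ℕ) * Real.cos θ ^ 1 * -Real.sin θ)
        - 3 * (Real.cos θ * Real.cos θ + Real.sin θ * -Real.sin θ))) θ := by
    have : HasDerivAt (fun t => R ^ 2 * (3 * (t - π / 6) + Real.sqrt 3 * Real.cos t ^ 2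
        - 3 * Real.sin t * Real.cos t))
        (R ^ 2 * (3 * 1 + Real.sqrt 3 * ((2 : ℕ) * Real.cos θ ^ 1 * -Real.sin θ)
          - 3 * (Real.cos θ * Real.cos θ + Real.sin θ * -Real.sin θ))) θ := by
      have h1 : HasDerivAt (fun t : ℝ => 3 * (t - π / 6)) (3 * 1) θ :=
        ((hasDerivAt_id θ).sub_const _).const_mul 3
      have h2 : HasDerivAt (fun t => Real.sqrt 3 * Real.cos t ^ 2)
          (Real.sqrt 3 * ((2 : ℕ) * Real.cos θ ^ 1 * -Real.sin θ)) θ := hcos2.const_mul _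
      have h3' : HasDerivAt (fun t => 3 * (Real.sin t * Real.cos t))
          (3 * (Real.cos θ * Real.cos θ + Real.sin θ * -Real.sin θ)) θ := hsc.const_mul 3
      have h := ((h1.add h2).sub h3').const_mul (R ^ 2)
      have heq : (fun t => R ^ 2 * (3 * (t - π / 6) + Real.sqrt 3 * Real.cos t ^ 2
          - 3 * Real.sin t * Real.cos t)) = fun t => R ^ 2 * (3 * (t - π / 6)
          + Real.sqrt 3 * Real.cos t ^ 2 - 3 * (Real.sin t * Real.cos t)) := by
        funext t; ring
      rw [heq]; exact h
    exact (funext hA₃ : A₃ = _) ▸ this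
  have hN : HasDerivAt (fun t => A₁ - x * A₂ t + y * A₃ t)
      (-(x * (2 * R ^ 2 * (1 - (Real.cos θ * Real.cos θ + Real.sin θ * -Real.sin θ))))
        + y * (R ^ 2 * (3 * 1 + Real.sqrt 3 * ((2 : ℕ) * Real.cos θ ^ 1 * -Real.sin θ)
          - 3 * (Real.cos θ * Real.cos θ + Real.sin θ * -Real.sin θ)))) θ := by
    have := ((hasDerivAt_const θ A₁).sub (hA2'.const_mul x)).add (hA3'.const_mul y)
    exact this.congr_deriv (by ring)
  have hD : HasDerivAt (fun t => A₁ - 3 * A₂ t + 2 * A₃ t)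
      (-(3 * (2 * R ^ 2 * (1 - (Real.cos θ * Real.cos θ + Real.sin θ * -Real.sin θ))))
        + 2 * (R ^ 2 * (3 * 1 + Real.sqrt 3 * ((2 : ℕ) * Real.cos θ ^ 1 * -Real.sin θ)
          - 3 * (Real.cos θ * Real.cos θ + Real.sin θ * -Real.sin θ)))) θ := by
    have := ((hasDerivAt_const θ A₁).sub (hA2'.const_mul 3)).add (hA3'.const_mul 2)
    exact this.congr_deriv (by ring)
  have hdiv := hN.div hD hdenne
  constructor
  · refine hdiv.congr_deriv ?_
    symm
    rw [hden θ, hA₁, hA₂, hA₃]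
    field_simp
    ring_nf
    linear_combination (Real.sqrt 3 * Real.sin θ * Real.cos θ *
        (-2 * y * π + 12 * y * θ + 4 * π - 8 * θ * x)) * h3 +
      (Real.sqrt 3 * Real.cos θ ^ 2 * (18 * y - 12 * x)) * hpyth
  · have hbr : 0 < (2 - y) * (π - 2 * θ) + 4 * θ * (1 + y - x) := by
      have : 0 < π - 2 * θ := by linarith
      have h1 : 0 < (2 - y) * (π - 2 * θ) := mul_pos (by linarith) this
      have h2 : 0 < 4 * θ * (1 + y - x) := mul_pos (by linarith) hxy
      linarith
    have : 0 < Real.sqrt 3 * Real.sin θ / (6 * Real.cos θ ^ 3) := by positivity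
    exact mul_pos this hbr
end

section
/- Let θ ∈ (π/6, arccos(1/√3)). Then the 3-overlap area A₃(θ) = R²[3(θ − π/6) + √3 cos²θ − 3 sin θ cos θ] is strictly positive, and A₃ is continuous at θ = π/6 with A₃(π/6) = 0. -/
open Real

noncomputable def gfun (θ : ℝ) : ℝ :=
  3 * (θ - π / 6) + Real.sqrt 3 * Real.cos θ ^ 2 - 3 * Real.sin θ * Real.cos θ

lemma gfun_hasDerivAt (θ : ℝ) :
    HasDerivAt gfun
      (3 + Real.sqrt 3 * (2 * Real.cos θ * (-Real.sin θ))
        - 3 * (Real.cos θ * Real.cos θ + Real.sin θ * (-Real.sin θ))) θ := by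
  have h1 : HasDerivAt (fun θ : ℝ => 3 * (θ - π / 6)) 3 θ := by
    simpa using ((hasDerivAt_id θ).sub_const (π/6)).const_mul 3
  have h2 : HasDerivAt (fun θ : ℝ => Real.cos θ ^ 2)
      (2 * Real.cos θ * (-Real.sin θ)) θ := by
    simpa using (Real.hasDerivAt_cos θ).fun_pow 2
  have h3 : HasDerivAt (fun θ : ℝ => Real.sin θ * Real.cos θ)
      (Real.cos θ * Real.cos θ + Real.sin θ * (-Real.sin θ)) θ :=
    (Real.hasDerivAt_sin θ).mul (Real.hasDerivAt_cos θ)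
  have := (h1.add (h2.const_mul (Real.sqrt 3))).sub (h3.const_mul 3)
  have hfe : gfun = fun x => 3 * (x - π / 6) + Real.sqrt 3 * Real.cos x ^ 2
      - 3 * (Real.sin x * Real.cos x) := by
    funext x; unfold gfun; ring
  rw [hfe]; exact this

lemma gfun_cont : Continuous gfun := by
  unfold gfun; fun_prop

lemma gfun_strictMono : StrictMonoOn gfun (Set.Icc (π / 6) (π / 2)) := by
  apply strictMonoOn_of_deriv_pos (convex_Icc _ _) (gfun_cont.continuousOn)
  intro x hx
  rw [interior_Icc] at hx
  rw [(gfun_hasDerivAt x).deriv]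
  have hs : 0 < Real.sin x := by
    apply Real.sin_pos_of_pos_of_lt_pi
    · linarith [hx.1, Real.pi_pos]
    · linarith [hx.2, Real.pi_pos]
  have hkey : Real.cos x < Real.sqrt 3 * Real.sin x := by
    have h := Real.sin_pos_of_pos_of_lt_pi (x := x - π/6) (by linarith [hx.1]) (by linarith [hx.2, Real.pi_pos])
    rw [Real.sin_sub, Real.cos_pi_div_six, Real.sin_pi_div_six] at h
    nlinarith
  have hpyth := Real.sin_sq_add_cos_sq x
  have h3 : Real.sqrt 3 * Real.sqrt 3 = 3 := Real.mul_self_sqrt (by norm_num)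
  nlinarith [mul_pos (Real.sqrt_pos.mpr (by norm_num : (0:ℝ) < 3))
    (mul_pos hs (sub_pos.2 hkey))]

lemma gfun_at : gfun (π / 6) = 0 := by
  unfold gfun
  rw [Real.cos_pi_div_six, Real.sin_pi_div_six]
  have h : Real.sqrt 3 ^ 2 = 3 := Real.sq_sqrt (by norm_num)
  linear_combination (Real.sqrt 3 / 4) * h

/-- The triple-overlap area
`A₃(θ) = R²[3(θ − π/6) + √3 cos²θ − 3 sin θ cos θ]` is strictly positive on
`(π/6, arccos(1/√3))`, continuous at `θ = π/6`, and vanishes at `θ = π/6`. -/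
theorem triple_overlap_area (R : ℝ) (hR : 0 < R)
    (A₃ : ℝ → ℝ)
    (hA₃ : ∀ θ, A₃ θ = R ^ 2 * (3 * (θ - π / 6) + Real.sqrt 3 * Real.cos θ ^ 2
      - 3 * Real.sin θ * Real.cos θ)) :
    (∀ θ ∈ Set.Ioo (π / 6) (Real.arccos (1 / Real.sqrt 3)), 0 < A₃ θ) ∧
    ContinuousAt A₃ (π / 6) ∧ A₃ (π / 6) = 0 := by
  have hAeq : A₃ = fun θ => R ^ 2 * gfun θ := by
    funext θ; rw [hA₃ θ]; rfl
  have harc : Real.arccos (1 / Real.sqrt 3) ≤ π / 2 := by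
    rw [Real.arccos_le_pi_div_two]
    positivity
  refine ⟨?_, ?_, ?_⟩
  · intro θ hθ
    rw [hAeq]
    have h1 : gfun (π/6) < gfun θ := by
      apply gfun_strictMono
      · exact ⟨le_refl _, by linarith [Real.pi_pos]⟩
      · exact ⟨le_of_lt hθ.1, le_trans (le_of_lt hθ.2) harc⟩
      · exact hθ.1
    rw [gfun_at] at h1
    positivity
  · rw [hAeq]
    exact ((continuous_const.mul gfun_cont).continuousAt)
  · rw [hAeq]; simp [gfun_at]
end
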